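/- Fix a ∈ ℂ and let ρ_a be the representation of the generators H, K, X, Y on ℂ² given by ρ_a(H) = diag(a+1, a-1), ρ_a(K) = diag(𝒊^(a+1), -𝒊^(a+1)), ρ_a(X) = [[0,0],[𝒊^(a+1) - 𝒊^(-a-1), 0]], ρ_a(Y) = [[0,1],[0,0]]. Define the dual action on ℂ² by ρ_a∨(T) = (ρ_a(s(T)))ᵀ, where the antipode acts by s(H) = -H, s(K) = K⁻¹, s(X) = -ρ_a(X)ρ_a(K), s(Y) = -ρ_a(K)⁻¹ρ_a(Y). Then the linear map f : ℂ² → ℂ² given by the matrix [[0, 𝒊^(a-1)],[1, 0]] (i.e., e⁰ ↦ e₁, e¹ ↦ 𝒊^(a-1) e₀) is invertible and satisfies f ∘ ρ_a∨(T) = ρ_(-a)(T) ∘ f for each generator T ∈ {H, K, X, Y}. -/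

import Mathlib

open Matrix

/-- `ip x` is 𝒊^x := exp(xπ√-1/2). -/
noncomputable def ip (x : ℂ) : ℂ := Complex.exp (x * (Real.pi * Complex.I) / 2)

noncomputable def Hm (a : ℂ) : Matrix (Fin 2) (Fin 2) ℂ := !![a + 1, 0; 0, a - 1]
noncomputable def Km (a : ℂ) : Matrix (Fin 2) (Fin 2) ℂ :=
  !![ip (a + 1), 0; 0, -ip (a + 1)]
noncomputable def Xm (a : ℂ) : Matrix (Fin 2) (Fin 2) ℂ :=
  !![0, 0; ip (a + 1) - ip (-a - 1), 0]
def Ym : Matrix (Fin 2) (Fin 2) ℂ := !![0, 1; 0, 0]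

lemma ip_mul (x y : ℂ) : ip x * ip y = ip (x + y) := by
  unfold ip
  rw [← Complex.exp_add]
  ring_nf

lemma ip_ne_zero (x : ℂ) : ip x ≠ 0 := Complex.exp_ne_zero _

lemma ip_zero : ip 0 = 1 := by simp [ip]

lemma ip_two : ip 2 = -1 := by
  unfold ip
  rw [show (2 : ℂ) * (Real.pi * Complex.I) / 2 = Real.pi * Complex.I by ring,
    Complex.exp_pi_mul_I]

lemma Km_inv (a : ℂ) : (Km a)⁻¹ = !![ip (-a - 1), 0; 0, -ip (-a - 1)] := by
  apply inv_eq_right_inv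
  rw [Km, Matrix.mul_fin_two]
  have h : ip (a + 1) * ip (-a - 1) = 1 := by
    rw [ip_mul, show a + 1 + (-a - 1) = 0 by ring, ip_zero]
  norm_num [h]
  rw [← Matrix.one_fin_two]

/-- The explicit map f : e⁰ ↦ e₁, e¹ ↦ 𝒊^(a-1) e₀ is an isomorphism from the
dual of the U_𝒊 sl(2)-module I(a) onto I(-a): it is invertible and intertwines
the dual action ρ_a∨(T) = (ρ_a(s(T)))ᵀ with ρ_{-a}(T) for each generator
T ∈ {H, K, X, Y}, where s(H) = -H, s(K) = K⁻¹, s(X) = -XK, s(Y) = -K⁻¹Y. -/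
theorem stmt_8 (a : ℂ) :
    let f : Matrix (Fin 2) (Fin 2) ℂ := !![0, ip (a - 1); 1, 0]
    IsUnit f ∧
    f * (-(Hm a))ᵀ = Hm (-a) * f ∧
    f * ((Km a)⁻¹)ᵀ = Km (-a) * f ∧
    f * (-(Xm a * Km a))ᵀ = Xm (-a) * f ∧
    f * (-((Km a)⁻¹ * Ym))ᵀ = Ym * f := by
  intro f
  have hc : ip (a - 1) * ip (-a - 1) = -1 := by
    rw [ip_mul, show a - 1 + (-a - 1) = -2 by ring]
    have h2 : ip (-2) * ip 2 = 1 := by rw [ip_mul]; norm_num [ip_zero]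
    rw [ip_two] at h2
    linear_combination -h2
  have hK : ip (-a + 1) = -ip (-a - 1) := by
    have h := ip_mul (-a - 1) 2
    rw [ip_two, show -a - 1 + 2 = -a + 1 by ring] at h
    linear_combination -h
  have hP : ip (a + 1) = -ip (a - 1) := by
    have h := ip_mul (a - 1) 2
    rw [ip_two, show a - 1 + 2 = a + 1 by ring] at h
    linear_combination -h
  have hq := hc  -- c * q = -1
  have hHt : (-(Hm a))ᵀ = !![-(a+1), 0; 0, -(a-1)] := by
    ext i j; fin_cases i <;> fin_cases j <;> simp [Hm]
  have hKt : ((Km a)⁻¹)ᵀ = !![ip (-a-1), 0; 0, -ip (-a-1)] := by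
    rw [Km_inv]
    ext i j; fin_cases i <;> fin_cases j <;> simp
  have hXt : (-(Xm a * Km a))ᵀ =
      !![0, -(ip (a+1) - ip (-a-1)) * ip (a+1); 0, 0] := by
    rw [Xm, Km, Matrix.mul_fin_two]
    ext i j; fin_cases i <;> fin_cases j <;> simp <;> ring
  have hYt : (-((Km a)⁻¹ * Ym))ᵀ = !![0, 0; -ip (-a-1), 0] := by
    rw [Km_inv, Ym, Matrix.mul_fin_two]
    ext i j; fin_cases i <;> fin_cases j <;> simp
  refine ⟨?_, ?_, ?_, ?_, ?_⟩
  · rw [Matrix.isUnit_iff_isUnit_det]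
    simp [f, Matrix.det_fin_two_of, ip_ne_zero]
  · rw [hHt, Hm]
    show !![0, ip (a-1); 1, 0] * _ = _
    rw [Matrix.mul_fin_two, Matrix.mul_fin_two]
    norm_num
    ring
    exact ⟨trivial, trivial⟩
  · rw [hKt, Km]
    show !![0, ip (a-1); 1, 0] * _ = _
    rw [Matrix.mul_fin_two, Matrix.mul_fin_two]
    norm_num [hK, mul_comm]
  · rw [hXt, Xm]
    show !![0, ip (a-1); 1, 0] * !![0, -(ip (a+1) - ip (-a-1)) * ip (a+1); 0, 0]
      = !![0, 0; ip (-a + 1) - ip (-(-a) - 1), 0] * !![0, ip (a-1); 1, 0]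
    rw [Matrix.mul_fin_two, Matrix.mul_fin_two, neg_neg]
    norm_num [hK, hP]
    ring_nf
  · rw [hYt, Ym]
    show !![0, ip (a-1); 1, 0] * !![0, 0; -ip (-a-1), 0]
      = !![0, 1; 0, 0] * !![0, ip (a-1); 1, 0]
    rw [Matrix.mul_fin_two, Matrix.mul_fin_two]
    ext i j
    fin_cases i <;> fin_cases j <;> simp <;> linear_combination -hc
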